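/- The two simplices obtained by bisecting a simplex at the midpoint of one edge cover the original simplex: S = S₁ ∪ S₂. -/
import Mathlib

open Finset

lemma mem_hull_range_iff {n : ℕ} {E : Type*} [AddCommGroup E] [Module ℝ E]
    (v : Fin n → E) (x : E) :
    x ∈ convexHull ℝ (Set.range v) ↔
      ∃ w : Fin n → ℝ, (∀ i, 0 ≤ w i) ∧ ∑ i, w i = 1 ∧ ∑ i, w i • v i = x := by
  constructor
  · intro hx
    rw [convexHull_range_eq_exists_affineCombination] at hx
    obtain ⟨s, w, hw0, hw1, hx⟩ := hx
    refine ⟨fun i => if i ∈ s then w i else 0, fun i => ?_, ?_, ?_⟩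
    · dsimp only
      split_ifs with h
      · exact hw0 i h
      · exact le_refl 0
    · simp [Finset.sum_ite_mem, Finset.univ_inter, hw1]
    · rw [← hx, affineCombination_eq_linear_combination s v w hw1]
      rw [← Finset.sum_subset (Finset.subset_univ s)]
      · exact Finset.sum_congr rfl fun i hi => by simp [hi]
      · intro i _ hi; simp [hi]
  · rintro ⟨w, h0, h1, hx⟩
    exact mem_convexHull_of_exists_fintype w v h0 h1 (fun i => Set.mem_range_self i) hx

/-- The two simplices obtained by bisecting a simplex at the
midpoint of edge v₀v₁ cover the original simplex: S = S₁ ∪ S₂. -/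
theorem simplex_bisection_covers
    (p : ℕ) (hp : 0 < p)
    (v : Fin (p + 1) → (Fin p → ℝ)) (hv : AffineIndependent ℝ v)
    (m : Fin p → ℝ) (hm : m = midpoint ℝ (v 0) (v 1)) :
    convexHull ℝ (Set.range v)
      = convexHull ℝ (Set.range (Function.update v 0 m))
        ∪ convexHull ℝ (Set.range (Function.update v 1 m)) := by
  obtain ⟨q, rfl⟩ : ∃ q, p = q + 1 := ⟨p - 1, (Nat.succ_pred_eq_of_pos hp).symm⟩
  have h01 : (0 : Fin (q + 1 + 1)) ≠ 1 := by simp [Fin.ext_iff]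
  have hmm : v 0 + v 1 = m + m := by rw [hm, midpoint_add_self]
  have hs0 : ∀ x : Fin q, (x.succ.succ : Fin (q + 1 + 1)) ≠ 0 := fun x => Fin.succ_ne_zero _
  have hs1 : ∀ x : Fin q, (x.succ.succ : Fin (q + 1 + 1)) ≠ 1 := by
    intro x
    simp [Fin.ext_iff]
  apply Set.Subset.antisymm
  · intro x hx
    rw [mem_hull_range_iff] at hx
    obtain ⟨w, h0, h1, rfl⟩ := hx
    rcases le_total (w 0) (w 1) with hle | hle
    · left
      rw [mem_hull_range_iff]
      refine ⟨fun i => if i = 0 then 2 * w 0 else if i = 1 then w 1 - w 0 else w i, ?_, ?_, ?_⟩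
      · intro i
        dsimp only
        split_ifs
        · linarith [h0 0]
        · linarith
        · exact h0 i
      · rw [← h1]
        simp [Fin.sum_univ_succ, Fin.succ_ne_zero, (Fin.succ_injective _).ne_iff, hs0, hs1]
        ring
      · have key : (2 * w 0) • m = w 0 • v 0 + w 0 • v 1 := by
          rw [two_mul, add_smul, ← smul_add, ← hmm, smul_add]
        simp [Fin.sum_univ_succ, Fin.succ_ne_zero, (Fin.succ_injective _).ne_iff, hs0, hs1,
          Function.update_apply, h01, key, sub_smul]
        abel
    · right
      rw [mem_hull_range_iff]
      refine ⟨fun i => if i = 1 then 2 * w 1 else if i = 0 then w 0 - w 1 else w i, ?_, ?_, ?_⟩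
      · intro i
        dsimp only
        split_ifs
        · linarith [h0 1]
        · linarith
        · exact h0 i
      · rw [← h1]
        simp [Fin.sum_univ_succ, Fin.succ_ne_zero, (Fin.succ_injective _).ne_iff, hs0, hs1, h01]
        ring
      · have key : (2 * w 1) • m = w 1 • v 0 + w 1 • v 1 := by
          rw [two_mul, add_smul, ← smul_add, ← hmm, smul_add]
        simp [Fin.sum_univ_succ, Fin.succ_ne_zero, (Fin.succ_injective _).ne_iff, hs0, hs1,
          Function.update_apply, h01, h01.symm, key, sub_smul]
        abel
  · have hmmem : m ∈ convexHull ℝ (Set.range v) := by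
      rw [hm]
      exact (convex_convexHull ℝ _).segment_subset
        (subset_convexHull ℝ (Set.range v) (Set.mem_range_self 0))
        (subset_convexHull ℝ (Set.range v) (Set.mem_range_self 1))
        (midpoint_mem_segment _ _)
    apply Set.union_subset <;>
    · apply convexHull_min _ (convex_convexHull ℝ _)
      rintro _ ⟨i, rfl⟩
      rw [Function.update_apply]
      split_ifs
      · exact hmmem
      · exact subset_convexHull ℝ _ (Set.mem_range_self i)
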